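/- Let U be a finite set, a a natural number, and ρ : U → ℝ a nonnegative function with Σ_{v∈U} ρ(v)^a > 0; define P(u) = ρ(u)^a / Σ_{v∈U} ρ(v)^a for u ∈ U. Let γ > 0, let α be a real number, let U' ⊆ U, and let e' ∈ U. Then (1/γ)·Σ_{u∈U'} ρ(e')·P(u) − (1−α)·Σ_{u∈U'} ρ(u)·P(u) ≤ (|U'|/(γ·(a+1)))·ρ(e')·P(e') + ((1/γ)·(a/(a+1)) + α − 1)·Σ_{u∈U'} ρ(u)·P(u). -/

import Mathlib

lemma amgm_pow (a : ℕ) {x y : ℝ} (hx : 0 ≤ x) (hy : 0 ≤ y) :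
    x * y ^ a ≤ (x ^ (a + 1) + (a : ℝ) * y ^ (a + 1)) / ((a : ℝ) + 1) := by
  have hN : (0:ℝ) < (a : ℝ) + 1 := by positivity
  have h := Real.geom_mean_le_arith_mean2_weighted
    (w₁ := 1 / ((a:ℝ)+1)) (w₂ := (a:ℝ) / ((a:ℝ)+1))
    (p₁ := x ^ (a+1)) (p₂ := y ^ (a+1))
    (by positivity) (by positivity) (by positivity) (by positivity)
    (by rw [← add_div, add_comm, div_self hN.ne'])
  have hx1 : (x ^ (a+1) : ℝ) ^ (1 / ((a:ℝ)+1)) = x := by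
    rw [← Real.rpow_natCast x (a+1), ← Real.rpow_mul hx]
    push_cast
    rw [mul_one_div, div_self hN.ne', Real.rpow_one]
  have hy1 : (y ^ (a+1) : ℝ) ^ ((a:ℝ) / ((a:ℝ)+1)) = y ^ a := by
    rw [← Real.rpow_natCast y (a+1), ← Real.rpow_mul hy]
    push_cast
    rw [mul_div_assoc']
    rw [show ((a:ℝ)+1) * (a:ℝ) / ((a:ℝ)+1) = (a:ℝ) by field_simp]
    exact Real.rpow_natCast y a
  rw [hx1, hy1] at h
  calc x * y ^ a ≤ (1 / ((a:ℝ)+1)) * x ^ (a+1) + ((a:ℝ) / ((a:ℝ)+1)) * y ^ (a+1) := h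
    _ = (x ^ (a + 1) + (a : ℝ) * y ^ (a + 1)) / ((a:ℝ)+1) := by field_simp

theorem prob_amgm_step {ι : Type*} [DecidableEq ι] (U : Finset ι) (a : ℕ)
    (ρ : ι → ℝ) (hρ : ∀ u ∈ U, 0 ≤ ρ u)
    (hsum : 0 < ∑ v ∈ U, ρ v ^ a)
    (γ α : ℝ) (hγ : 0 < γ)
    (U' : Finset ι) (hU' : U' ⊆ U) (e' : ι) (he' : e' ∈ U) :
    (1 / γ) * ∑ u ∈ U', ρ e' * (ρ u ^ a / ∑ v ∈ U, ρ v ^ a)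
        - (1 - α) * ∑ u ∈ U', ρ u * (ρ u ^ a / ∑ v ∈ U, ρ v ^ a)
      ≤ ((U'.card : ℝ) / (γ * ((a : ℝ) + 1))) * (ρ e' * (ρ e' ^ a / ∑ v ∈ U, ρ v ^ a))
        + ((1 / γ) * ((a : ℝ) / ((a : ℝ) + 1)) + α - 1)
            * ∑ u ∈ U', ρ u * (ρ u ^ a / ∑ v ∈ U, ρ v ^ a) := by
  set S := ∑ v ∈ U, ρ v ^ a with hS
  have hN : (0:ℝ) < (a : ℝ) + 1 := by positivity
  have he'0 : 0 ≤ ρ e' := hρ e' he'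
  have key : (1 / γ) * ∑ u ∈ U', ρ e' * (ρ u ^ a / S)
      ≤ ((U'.card : ℝ) / (γ * ((a : ℝ) + 1))) * (ρ e' * (ρ e' ^ a / S))
        + (1 / γ) * ((a : ℝ) / ((a : ℝ) + 1)) * ∑ u ∈ U', ρ u * (ρ u ^ a / S) := by
    have hstep : ∑ u ∈ U', ρ e' * (ρ u ^ a / S)
        ≤ ∑ u ∈ U', ((ρ e' ^ (a+1) + (a:ℝ) * ρ u ^ (a+1)) / ((a:ℝ)+1)) / S := by
      apply Finset.sum_le_sum
      intro u hu
      rw [mul_div_assoc']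
      gcongr
      exact amgm_pow a he'0 (hρ u (hU' hu))
    have hsplit : ∑ u ∈ U', ((ρ e' ^ (a+1) + (a:ℝ) * ρ u ^ (a+1)) / ((a:ℝ)+1)) / S
        = (U'.card : ℝ) * (ρ e' ^ (a+1) / (((a:ℝ)+1) * S))
          + ((a:ℝ) / ((a:ℝ)+1)) * ∑ u ∈ U', ρ u ^ (a+1) / S := by
      have hterm : ∀ u, (ρ e' ^ (a+1) + (a:ℝ) * ρ u ^ (a+1)) / ((a:ℝ)+1) / S
          = ρ e' ^ (a+1) / (((a:ℝ)+1) * S) + ((a:ℝ) / ((a:ℝ)+1)) * (ρ u ^ (a+1) / S) :=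
        fun u => by field_simp
      simp_rw [hterm, Finset.sum_add_distrib, Finset.sum_const, nsmul_eq_mul, ← Finset.mul_sum]
    calc (1 / γ) * ∑ u ∈ U', ρ e' * (ρ u ^ a / S)
        ≤ (1 / γ) * ((U'.card : ℝ) * (ρ e' ^ (a+1) / (((a:ℝ)+1) * S))
            + ((a:ℝ) / ((a:ℝ)+1)) * ∑ u ∈ U', ρ u ^ (a+1) / S) := by
          rw [← hsplit]
          exact mul_le_mul_of_nonneg_left hstep (by positivity)
      _ = ((U'.card : ℝ) / (γ * ((a : ℝ) + 1))) * (ρ e' * (ρ e' ^ a / S))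
          + (1 / γ) * ((a : ℝ) / ((a : ℝ) + 1)) * ∑ u ∈ U', ρ u * (ρ u ^ a / S) := by
          have h1 : ρ e' * (ρ e' ^ a / S) = ρ e' ^ (a+1) / S := by
            rw [mul_div_assoc', ← pow_succ']
          have h2 : ∀ u, ρ u * (ρ u ^ a / S) = ρ u ^ (a+1) / S := fun u => by
            rw [mul_div_assoc', ← pow_succ']
          simp_rw [h1, h2]
          field_simp
  nlinarith [key]
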